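/- Let d ≥ 2, let f : ℝ^d → ℝ^d be a continuous open map, and let U ⊆ ℝ^d be a bounded full domain such that f(∂U) ∩ f(U) = ∅. Then f(∂U) = ∂(f(U)), and f(U) is a bounded full domain. -/

import Mathlib

open Set Metric Bornology Complex

lemma log_step {X : Type*} [TopologicalSpace X] {g₁ g₂ : X → ℂ} (h₂ : Continuous g₂)
    (hne : ∀ x, g₁ x ≠ 0) (hlt : ∀ x, ‖g₂ x - g₁ x‖ < ‖g₁ x‖)
    {γ : X → ℂ} (hγ : Continuous γ) (hexp : ∀ x, Complex.exp (γ x) = g₁ x) :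
    ∃ γ' : X → ℂ, Continuous γ' ∧ ∀ x, Complex.exp (γ' x) = g₂ x := by
  have h₁ : Continuous g₁ := by
    have : Continuous fun x => Complex.exp (γ x) := Complex.continuous_exp.comp hγ
    simpa [funext hexp] using this
  have hq0 : ∀ x, g₂ x / g₁ x ≠ 0 := by
    intro x
    have h2 : g₂ x ≠ 0 := by
      intro h
      have := hlt x
      rw [h] at this
      simp at this
    exact div_ne_zero h2 (hne x)
  have hslit : ∀ x, g₂ x / g₁ x ∈ Complex.slitPlane := by
    intro x
    have hgpos : 0 < ‖g₁ x‖ := norm_pos_iff.2 (hne x)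
    have h1 : ‖g₂ x / g₁ x - 1‖ < 1 := by
      have : g₂ x / g₁ x - 1 = (g₂ x - g₁ x) / g₁ x := by
        rw [sub_div, div_self (hne x)]
      rw [this, norm_div, div_lt_one hgpos]
      exact hlt x
    refine Complex.mem_slitPlane_iff.2 (Or.inl ?_)
    have hre : |(g₂ x / g₁ x - 1).re| ≤ ‖g₂ x / g₁ x - 1‖ := Complex.abs_re_le_norm _
    have hre2 : (g₂ x / g₁ x - 1).re = (g₂ x / g₁ x).re - 1 := by
      rw [Complex.sub_re, Complex.one_re]
    nlinarith [abs_le.1 hre]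
  refine ⟨fun x => γ x + Complex.log (g₂ x / g₁ x), ?_, ?_⟩
  · exact hγ.add ((h₂.div h₁ hne).clog (fun x => hslit x))
  · intro x
    rw [Complex.exp_add, hexp x, Complex.exp_log (hq0 x)]
    rw [mul_comm, div_mul_cancel₀ _ (hne x)]



variable {E : Type*} [NormedAddCommGroup E] [NormedSpace ℝ E]

/-- radial clamp onto the closed ball of radius `t` -/
noncomputable def rclamp (t : ℝ) (x : E) : E :=
  if t ≤ 0 then 0 else (t / max t ‖x‖) • x

lemma rclamp_factor {w : ℝ} (hw : 0 < w) (n : ℝ) (hn : 0 ≤ n) :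
    (w / max w n) * n = min w n := by
  rcases le_total w n with hc | hc
  · have hx : 0 < n := lt_of_lt_of_le hw hc
    rw [max_eq_right hc, min_eq_left hc]; field_simp
  · rw [max_eq_left hc, min_eq_right hc, div_self (ne_of_gt hw), one_mul]

lemma rclamp_norm {t : ℝ} (ht : 0 ≤ t) (x : E) : ‖rclamp t x‖ = min t ‖x‖ := by
  unfold rclamp
  rcases eq_or_lt_of_le ht with h | h
  · simp [← h]
  · rw [if_neg (not_le.2 h), norm_smul, Real.norm_eq_abs,
      _root_.abs_of_nonneg (by positivity), rclamp_factor h _ (norm_nonneg x)]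

lemma min_sub_min_abs_le (s t n : ℝ) : |min s n - min t n| ≤ |s - t| := by
  rw [abs_sub_le_iff]
  constructor
  · have h1 : min s n ≤ min t n + |s - t| := by
      have := le_abs_self (s - t)
      calc min s n ≤ min (t + |s - t|) (n + |s - t|) :=
            min_le_min (by linarith) (by linarith [abs_nonneg (s - t)])
        _ = min t n + |s - t| := by rw [min_add_add_right]
    linarith
  · have h1 : min t n ≤ min s n + |s - t| := by
      have := neg_abs_le (s - t)
      calc min t n ≤ min (s + |s - t|) (n + |s - t|) :=
            min_le_min (by linarith) (by linarith [abs_nonneg (s - t)])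
        _ = min s n + |s - t| := by rw [min_add_add_right]
    linarith

lemma rclamp_dist {s t : ℝ} (hs : 0 ≤ s) (ht : 0 ≤ t) (x : E) :
    ‖rclamp s x - rclamp t x‖ ≤ |s - t| := by
  have key : ∀ u : ℝ, ‖rclamp u x‖ = min (max u 0) ‖x‖ := by
    intro u
    rcases le_total u 0 with h | h
    · have : rclamp u x = 0 := by unfold rclamp; rw [if_pos h]
      rw [this, max_eq_right h]
      simp [norm_nonneg]
    · rw [rclamp_norm h, max_eq_left h]
  calc ‖rclamp s x - rclamp t x‖ = |min (max s 0) ‖x‖ - min (max t 0) ‖x‖| := ?_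
    _ ≤ |max s 0 - max t 0| := min_sub_min_abs_le _ _ _
    _ = |s - t| := by rw [max_eq_left hs, max_eq_left ht]
  rcases eq_or_lt_of_le hs with h | hspos <;> rcases eq_or_lt_of_le ht with h' | htpos
  · unfold rclamp
    rw [if_pos h.symm.le, if_pos h'.symm.le]
    simp [← h, ← h']
  · unfold rclamp
    rw [if_pos h.symm.le, if_neg (not_le.2 htpos)]
    have := rclamp_norm ht x
    unfold rclamp at this
    rw [if_neg (not_le.2 htpos)] at this
    rw [zero_sub, norm_neg, this, ← h]
    rw [max_self, min_eq_left (norm_nonneg x), max_eq_left ht, zero_sub, abs_neg,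
      _root_.abs_of_nonneg (le_min ht (norm_nonneg x))]
  · have := rclamp_norm hs x
    unfold rclamp at this ⊢
    rw [if_neg (not_le.2 hspos), if_pos h'.symm.le]
    rw [if_neg (not_le.2 hspos)] at this
    rw [sub_zero, this, ← h']
    rw [max_self, min_eq_left (norm_nonneg x), max_eq_left hs, sub_zero,
      _root_.abs_of_nonneg (le_min hs (norm_nonneg x))]
  · unfold rclamp
    rw [if_neg (not_le.2 hspos), if_neg (not_le.2 htpos), ← sub_smul, norm_smul,
      Real.norm_eq_abs, max_eq_left hs, max_eq_left ht]
    have hn := norm_nonneg x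
    rw [show |s / (s ⊔ ‖x‖) - t / (t ⊔ ‖x‖)| * ‖x‖ =
        |(s / (s ⊔ ‖x‖)) * ‖x‖ - (t / (t ⊔ ‖x‖)) * ‖x‖| from by
          rw [← sub_mul, abs_mul, _root_.abs_of_nonneg hn]]
    rw [rclamp_factor hspos _ hn, rclamp_factor htpos _ hn]

lemma rclamp_continuous (t : ℝ) : Continuous fun x : E => rclamp t x := by
  unfold rclamp
  rcases le_or_gt t 0 with h | h
  · simp only [if_pos h]; exact continuous_const
  · simp only [if_neg (not_le.2 h)]
    have hmax : Continuous fun x : E => t ⊔ ‖x‖ := continuous_const.max continuous_norm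
    have hne : ∀ x : E, t ⊔ ‖x‖ ≠ 0 := fun x => ne_of_gt (lt_of_lt_of_le h (le_max_left _ _))
    exact (continuous_const.div hmax hne).smul continuous_id

lemma exists_clog {E : Type*} [NormedAddCommGroup E] [NormedSpace ℝ E] [ProperSpace E]
    {g : E → ℂ} (hg : Continuous g) (hne : ∀ x, g x ≠ 0) {R : ℝ} (hR : 0 < R)
    (hconst : ∀ x : E, R ≤ ‖x‖ → g x = 1) :
    ∃ γ : E → ℂ, Continuous γ ∧ ∀ x, Complex.exp (γ x) = g x := by
  obtain ⟨x₀, hx₀K, hx₀min⟩ := (isCompact_closedBall (0:E) R).exists_isMinOn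
      ⟨0, mem_closedBall_self hR.le⟩ (hg.norm.continuousOn)
  set δ : ℝ := ‖g x₀‖ with hδ
  have hδpos : 0 < δ := norm_pos_iff.2 (hne x₀)
  have hmin : ∀ y ∈ closedBall (0:E) R, δ ≤ ‖g y‖ := fun y hy => hx₀min hy
  obtain ⟨η, hηpos, hη⟩ := Metric.uniformContinuousOn_iff.1
    ((isCompact_closedBall (0:E) R).uniformContinuousOn_of_continuous hg.continuousOn) δ hδpos
  obtain ⟨N, hN⟩ := exists_nat_gt (R / η)
  have hNpos : 0 < (N:ℝ) := lt_trans (div_pos hR hηpos) hN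
  have hstep : R / N < η := by
    rw [div_lt_iff₀ hNpos]
    have := (div_lt_iff₀ hηpos).1 hN
    linarith [this]
  have hmemK : ∀ (t : ℝ), 0 ≤ t → t ≤ R → ∀ x : E, rclamp t x ∈ closedBall (0:E) R := by
    intro t ht htR x
    rw [mem_closedBall_zero_iff, rclamp_norm ht]
    exact le_trans (min_le_left _ _) htR
  have hT : ∀ i : ℕ, i ≤ N → 0 ≤ (i : ℝ) * R / N ∧ (i : ℝ) * R / N ≤ R := by
    intro i hi
    constructor
    · positivity
    · rw [div_le_iff₀ hNpos]
      have : (i : ℝ) ≤ N := Nat.cast_le.2 hi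
      nlinarith
  have main : ∀ j : ℕ, j ≤ N → ∃ γ : E → ℂ, Continuous γ ∧
      ∀ x, Complex.exp (γ x) = g (rclamp ((j : ℝ) * R / N) x) := by
    intro j
    induction j with
    | zero =>
      intro _
      refine ⟨fun _ => Complex.log (g 0), continuous_const, fun x => ?_⟩
      have h0 : rclamp ((0 : ℕ) * R / N : ℝ) x = (0 : E) := by
        unfold rclamp
        rw [if_pos (by simp)]
      rw [h0, Complex.exp_log (hne 0)]
    | succ j ih =>
      intro hj
      obtain ⟨γ, hγc, hγ⟩ := ih (Nat.le_of_succ_le hj)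
      have hj' := hT j (Nat.le_of_succ_le hj)
      have hj1 := hT (j+1) hj
      refine log_step (g₁ := fun x => g (rclamp ((j : ℝ) * R / N) x))
        (hg.comp (rclamp_continuous _)) (fun x => hne _) ?_ hγc hγ
      intro x
      have hcast : ((j+1 : ℕ) : ℝ) * R / (N:ℝ) = ((j:ℝ)+1) * R / (N:ℝ) := by push_cast; ring
      simp only [hcast]
      set a := rclamp (((j:ℝ) + 1) * R / (N:ℝ)) x with ha
      set b := rclamp ((j : ℝ) * R / (N:ℝ)) x with hb
      have haK : a ∈ closedBall (0:E) R := by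
        have := hmemK _ hj1.1 hj1.2 x
        rw [hcast] at this
        exact this
      have hbK : b ∈ closedBall (0:E) R := hmemK _ hj'.1 hj'.2 x
      have hdist : dist a b < η := by
        rw [dist_eq_norm]
        have h1 : ‖a - b‖ ≤ |((j:ℝ)+1) * R / (N:ℝ) - (j : ℝ) * R / (N:ℝ)| := by
          refine rclamp_dist ?_ hj'.1 x
          positivity
        have h2 : ((j:ℝ)+1) * R / (N:ℝ) - (j : ℝ) * R / (N:ℝ) = R / N := by
          field_simp; ring
        rw [h2] at h1
        calc ‖a - b‖ ≤ |R / N| := h1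
          _ = R / N := _root_.abs_of_nonneg (by positivity)
          _ < η := hstep
      have hlt : dist (g a) (g b) < δ := hη a haK b hbK hdist
      have hlt' : ‖g a - g b‖ < δ := by rwa [dist_eq_norm] at hlt
      exact lt_of_lt_of_le hlt' (hmin b hbK)
  obtain ⟨γ, hγc, hγ⟩ := main N le_rfl
  refine ⟨γ, hγc, fun x => ?_⟩
  rw [hγ x]
  have hNR : (N : ℝ) * R / N = R := by field_simp
  rw [hNR]
  rcases le_or_gt ‖x‖ R with h | h
  · have : rclamp R x = x := by
      unfold rclamp
      rw [if_neg (not_le.2 hR), max_eq_left h, div_self (ne_of_gt hR), one_smul]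
    rw [this]
  · have h1 : ‖rclamp R x‖ = R := by
      rw [rclamp_norm hR.le, min_eq_left h.le]
    rw [hconst _ h1.ge, hconst _ h.le]

lemma int_valued_const {s : Set ℝ} (hs : IsPreconnected s)
    (h : ∀ x ∈ s, ∃ n : ℤ, x = n) : ∀ x ∈ s, ∀ y ∈ s, x = y := by
  intro x hx y hy
  by_contra hne
  rcases lt_or_gt_of_ne hne with hlt | hlt
  all_goals {
    obtain ⟨m, hm⟩ := h x hx
    obtain ⟨k, hk⟩ := h y hy
    have hmk : m ≠ k := by rintro rfl; exact hne (hm.trans hk.symm)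
    have h1 : |(m : ℝ) - k| ≥ 1 := by
      rw [show ((m:ℝ) - k) = ((m - k : ℤ) : ℝ) by push_cast; ring]
      rw [← Int.cast_abs]
      exact_mod_cast Int.one_le_abs (sub_ne_zero.2 hmk)
    have hmid : ∃ c ∈ s, ∀ n : ℤ, c ≠ n := by
      rcases le_total x y with hxy | hxy
      · refine ⟨x + 1/2, hs.Icc_subset hx hy ⟨by linarith, ?_⟩, ?_⟩
        · rw [hm, hk] at hxy ⊢
          have : (m:ℝ) + 1 ≤ k := by
            have : m < k := by exact_mod_cast lt_of_le_of_ne hxy (by exact_mod_cast hm ▸ hk ▸ hne)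
            exact_mod_cast this
          linarith
        · intro n hn
          rw [hm] at hn
          have h2 : (2*(n:ℝ)) = 2*(m:ℝ)+1 := by linarith
          have h3 : (2*n : ℤ) = 2*m + 1 := by exact_mod_cast h2
          omega
      · refine ⟨y + 1/2, hs.Icc_subset hy hx ⟨by linarith, ?_⟩, ?_⟩
        · rw [hm, hk] at hxy ⊢
          have : (k:ℝ) + 1 ≤ m := by
            have : k < m := by exact_mod_cast lt_of_le_of_ne hxy (by exact_mod_cast hk ▸ hm ▸ (Ne.symm hne))
            exact_mod_cast this
          linarith
        · intro n hn
          rw [hk] at hn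
          have h2 : (2*(n:ℝ)) = 2*(k:ℝ)+1 := by linarith
          have h3 : (2*n : ℤ) = 2*k + 1 := by exact_mod_cast h2
          omega
    obtain ⟨c, hcs, hc⟩ := hmid
    obtain ⟨n, hn⟩ := h c hcs
    exact hc n hn
  }

lemma no_separation {E : Type*} [NormedAddCommGroup E] [NormedSpace ℝ E] [ProperSpace E]
    {A B P Q : Set E}
    (hA : IsClosed A) (hB : IsClosed B) (hAc : IsPreconnected A) (hBc : IsPreconnected B)
    (hUn : A ∪ B = univ) (hI : A ∩ B = P ∪ Q)
    (hP : IsClosed P) (hQ : IsClosed Q) (hPQ : Disjoint P Q)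
    (hAb : IsBounded A) (hPne : P.Nonempty) (hQne : Q.Nonempty) : False := by
  classical
  obtain ⟨R, hR0, hAR⟩ : ∃ R, 0 < R ∧ A ⊆ ball 0 R := by
    obtain ⟨R, hR, h⟩ := hAb.subset_ball_lt 0 0
    exact ⟨R, hR, h⟩
  have hPA : P ⊆ A ∩ B := hI ▸ subset_union_left
  have hQA : Q ⊆ A ∩ B := hI ▸ subset_union_right
  have hsclosed : IsClosed (Q ∪ (ball (0:E) R)ᶜ) := hQ.union isOpen_ball.isClosed_compl
  have hdisjPS : Disjoint (Q ∪ (ball (0:E) R)ᶜ) P := by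
    rw [disjoint_union_left]
    constructor
    · exact hPQ.symm
    · rw [disjoint_compl_left_iff_subset]
      exact fun x hx => hAR (hPA hx).1
  obtain ⟨α, hα0, hα1, hα01⟩ := exists_continuous_zero_one_of_isClosed hsclosed hP hdisjPS
  have hαQ : ∀ x ∈ Q, α x = 0 := fun x hx => hα0 (Or.inl hx)
  have hαout : ∀ x : E, R ≤ ‖x‖ → α x = 0 := by
    intro x hx
    exact hα0 (Or.inr (by simp [mem_ball_zero_iff]; linarith))
  have hαP : ∀ x ∈ P, α x = 1 := fun x hx => hα1 hx
  set b₁ : E → ℂ := fun x => Complex.exp ((Real.pi : ℂ) * Complex.I * (α x : ℂ)) with hb₁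
  set b₂ : E → ℂ := fun x => Complex.exp (-((Real.pi : ℂ) * Complex.I * (α x : ℂ))) with hb₂
  have hbranch : ∀ x ∈ A ∩ B, b₁ x = b₂ x := by
    intro x hx
    rw [hI] at hx
    rcases hx with hx | hx
    · rw [hb₁, hb₂]
      simp only [hαP x hx]
      norm_num [Complex.exp_pi_mul_I, Complex.exp_neg]
    · rw [hb₁, hb₂]
      simp [hαQ x hx]
  set g : E → ℂ := A.piecewise b₁ b₂ with hgdef
  have hfrA : frontier A ⊆ A ∩ B := by
    rw [frontier_eq_closure_inter_closure, hA.closure_eq]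
    refine inter_subset_inter le_rfl ?_
    rw [← hB.closure_eq]
    refine closure_mono ?_
    intro x hx
    rcases (eq_univ_iff_forall.1 hUn x) with h | h
    · exact absurd h hx
    · exact h
  have hgc : Continuous g := by
    refine Continuous.piecewise (fun a ha => hbranch a (hfrA ha)) ?_ ?_
    · exact Complex.continuous_exp.comp
        (continuous_const.mul (Complex.continuous_ofReal.comp α.continuous))
    · exact Complex.continuous_exp.comp
        ((continuous_const.mul (Complex.continuous_ofReal.comp α.continuous)).neg)
  have hgne : ∀ x, g x ≠ 0 := by
    intro x
    by_cases hx : x ∈ A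
    · rw [hgdef, piecewise_eq_of_mem _ _ _ hx]; exact Complex.exp_ne_zero _
    · rw [hgdef, piecewise_eq_of_notMem _ _ _ hx]; exact Complex.exp_ne_zero _
  have hgout : ∀ x : E, R ≤ ‖x‖ → g x = 1 := by
    intro x hx
    have hxA : x ∉ A := fun h => absurd (mem_ball_zero_iff.1 (hAR h)) (not_lt.2 hx)
    rw [hgdef, piecewise_eq_of_notMem _ _ _ hxA, hb₂]
    simp [hαout x hx]
  obtain ⟨γ, hγc, hγ⟩ := exists_clog hgc hgne hR0 hgout
  have hgA : ∀ x ∈ A, g x = b₁ x := fun x hx => piecewise_eq_of_mem _ _ _ hx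
  have hgB : ∀ x ∈ B, g x = b₂ x := by
    intro x hx
    by_cases hxA : x ∈ A
    · rw [hgdef, piecewise_eq_of_mem _ _ _ hxA]
      exact hbranch x ⟨hxA, hx⟩
    · exact piecewise_eq_of_notMem _ _ _ hxA
  -- on A : (γ x).im - π α x ∈ 2πℤ
  have keyA : ∀ x ∈ A, ∃ n : ℤ, (γ x).im - Real.pi * α x = n * (2 * Real.pi) := by
    intro x hx
    have h1 : Complex.exp (γ x - (Real.pi : ℂ) * Complex.I * (α x : ℂ)) = 1 := by
      rw [Complex.exp_sub, hγ x, hgA x hx, hb₁, div_self (Complex.exp_ne_zero _)]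
    obtain ⟨n, hn⟩ := Complex.exp_eq_one_iff.1 h1
    refine ⟨n, ?_⟩
    have := congrArg Complex.im hn
    simpa using this
  have keyB : ∀ x ∈ B, ∃ n : ℤ, (γ x).im + Real.pi * α x = n * (2 * Real.pi) := by
    intro x hx
    have h1 : Complex.exp (γ x + (Real.pi : ℂ) * Complex.I * (α x : ℂ)) = 1 := by
      rw [Complex.exp_add, hγ x, hgB x hx, hb₂, ← Complex.exp_add]
      simp
    obtain ⟨n, hn⟩ := Complex.exp_eq_one_iff.1 h1
    refine ⟨n, ?_⟩
    have := congrArg Complex.im hn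
    simpa using this
  set u : E → ℝ := fun x => ((γ x).im - Real.pi * α x) / (2 * Real.pi) with hu
  set v : E → ℝ := fun x => ((γ x).im + Real.pi * α x) / (2 * Real.pi) with hv
  have hucont : Continuous u :=
    ((Complex.continuous_im.comp hγc).sub (continuous_const.mul α.continuous)).div_const _
  have hvcont : Continuous v :=
    ((Complex.continuous_im.comp hγc).add (continuous_const.mul α.continuous)).div_const _
  have huconst : ∀ x ∈ A, ∀ y ∈ A, u x = u y := by
    have himg : IsPreconnected (u '' A) := hAc.image u hucont.continuousOn
    have hint : ∀ z ∈ u '' A, ∃ n : ℤ, z = n := by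
      rintro z ⟨x, hx, rfl⟩
      obtain ⟨n, hn⟩ := keyA x hx
      exact ⟨n, by rw [hu]; field_simp [Real.pi_ne_zero]; linarith [hn]⟩
    intro x hx y hy
    exact int_valued_const himg hint _ (mem_image_of_mem u hx) _ (mem_image_of_mem u hy)
  have hvconst : ∀ x ∈ B, ∀ y ∈ B, v x = v y := by
    have himg : IsPreconnected (v '' B) := hBc.image v hvcont.continuousOn
    have hint : ∀ z ∈ v '' B, ∃ n : ℤ, z = n := by
      rintro z ⟨x, hx, rfl⟩
      obtain ⟨n, hn⟩ := keyB x hx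
      exact ⟨n, by rw [hv]; field_simp [Real.pi_ne_zero]; linarith [hn]⟩
    intro x hx y hy
    exact int_valued_const himg hint _ (mem_image_of_mem v hx) _ (mem_image_of_mem v hy)
  obtain ⟨p, hp⟩ := hPne
  obtain ⟨q, hq⟩ := hQne
  have hpAB := hPA hp
  have hqAB := hQA hq
  have e1 : u q = v q := by rw [hu, hv]; simp [hαQ q hq]
  have e2 : v p = u p + 1 := by
    simp only [hu, hv, hαP p hp]
    field_simp
    ring
  have e3 : u p = u q := huconst p hpAB.1 q hqAB.1
  have e4 : v p = v q := hvconst p hpAB.2 q hqAB.2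
  rw [e4, ← e1, ← e3] at e2
  linarith

lemma isClosed_connectedComponentIn {X : Type*} [TopologicalSpace X] {F : Set X}
    (hF : IsClosed F) {x : X} : IsClosed (connectedComponentIn F x) := by
  by_cases hx : x ∈ F
  · have h1 : closure (connectedComponentIn F x) ⊆ connectedComponentIn F x := by
      refine IsPreconnected.subset_connectedComponentIn ?_ ?_ ?_
      · exact (isPreconnected_connectedComponentIn).closure
      · exact subset_closure (mem_connectedComponentIn hx)
      · exact hF.closure_subset_iff.2 (connectedComponentIn_subset _ _)
    exact isClosed_of_closure_subset h1
  · rw [connectedComponentIn_eq_empty hx]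
    exact isClosed_empty

lemma frontier_connectedComponentIn_subset {X : Type*} [TopologicalSpace X]
    [LocallyConnectedSpace X] {F : Set X} (hF : IsClosed F) {x : X} :
    frontier (connectedComponentIn F x) ⊆ frontier F := by
  intro z hz
  by_cases hx : x ∈ F
  · have hCcl : IsClosed (connectedComponentIn F x) := isClosed_connectedComponentIn hF
    have hzC : z ∈ connectedComponentIn F x := by
      rw [IsClosed.frontier_eq hCcl] at hz
      exact hz.1
    have hzF : z ∈ F := connectedComponentIn_subset _ _ hzC
    rw [hF.frontier_eq]
    refine ⟨hzF, ?_⟩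
    intro hzint
    have hD : IsOpen (connectedComponentIn (interior F) z) := isOpen_interior.connectedComponentIn
    have hDsub : connectedComponentIn (interior F) z ⊆ connectedComponentIn F x := by
      rw [connectedComponentIn_eq hzC]
      refine IsPreconnected.subset_connectedComponentIn isPreconnected_connectedComponentIn
        (mem_connectedComponentIn hzint) ?_
      exact (connectedComponentIn_subset _ _).trans interior_subset
    have : z ∈ interior (connectedComponentIn F x) := by
      apply interior_mono hDsub
      rw [hD.interior_eq]
      exact mem_connectedComponentIn hzint
    rw [IsClosed.frontier_eq hCcl] at hz
    exact hz.2 this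
  · rw [connectedComponentIn_eq_empty hx] at hz
    simp at hz

lemma exterior_preconnected {d : ℕ} (hd : 2 ≤ d) {R : ℝ} (hR : 0 ≤ R) :
    IsPreconnected {x : EuclideanSpace ℝ (Fin d) | R < ‖x‖} := by
  have hrank : 1 < Module.rank ℝ (EuclideanSpace ℝ (Fin d)) := by
    have := Module.finrank_eq_rank ℝ (EuclideanSpace ℝ (Fin d))
    rw [← this, finrank_euclideanSpace]
    simp only [Fintype.card_fin]
    exact_mod_cast (by omega : 1 < d)
  refine isPreconnected_of_forall_pair ?_
  intro x hx y hy
  set r : ℝ := max ‖x‖ ‖y‖ with hr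
  have hrR : R < r := lt_of_lt_of_le hx (le_max_left _ _)
  have hxpos : 0 < ‖x‖ := lt_of_le_of_lt hR hx
  have hypos : 0 < ‖y‖ := lt_of_le_of_lt hR hy
  have hray : ∀ w : EuclideanSpace ℝ (Fin d), 0 < ‖w‖ → R < ‖w‖ → ‖w‖ ≤ r →
      IsPreconnected ((fun c : ℝ => c • w) '' Icc 1 (r / ‖w‖)) ∧
      ((fun c : ℝ => c • w) '' Icc 1 (r / ‖w‖)) ⊆ {x : EuclideanSpace ℝ (Fin d) | R < ‖x‖} ∧
      w ∈ ((fun c : ℝ => c • w) '' Icc 1 (r / ‖w‖)) := by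
    intro w hw hRw hwr
    refine ⟨(isPreconnected_Icc).image _ (Continuous.continuousOn (by continuity)), ?_, ?_⟩
    · rintro _ ⟨c, hc, rfl⟩
      have : ‖c • w‖ = c * ‖w‖ := by
        rw [norm_smul, Real.norm_eq_abs, _root_.abs_of_nonneg (le_trans zero_le_one hc.1)]
      simp only [mem_setOf_eq, this]
      nlinarith [hc.1]
    · exact ⟨1, ⟨le_refl 1, by rw [le_div_iff₀ hw]; simpa using hwr⟩, one_smul _ _⟩
  obtain ⟨hx1, hx2, hx3⟩ := hray x hxpos hx (le_max_left _ _)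
  obtain ⟨hy1, hy2, hy3⟩ := hray y hypos hy (le_max_right _ _)
  have hrpos : 0 < r := lt_of_le_of_lt hR hrR
  have hsph : IsPreconnected (sphere (0:EuclideanSpace ℝ (Fin d)) r) :=
    (isPathConnected_sphere hrank 0 hrpos.le).isConnected.isPreconnected
  have hsphS : sphere (0:EuclideanSpace ℝ (Fin d)) r ⊆ {x : EuclideanSpace ℝ (Fin d) | R < ‖x‖} := by
    intro z hz
    rw [mem_sphere_zero_iff_norm] at hz
    simpa [mem_setOf_eq, hz] using hrR
  have hpx : (r / ‖x‖) • x ∈ (fun c : ℝ => c • x) '' Icc 1 (r / ‖x‖) :=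
    ⟨r/‖x‖, ⟨(le_div_iff₀ hxpos).2 (by rw [one_mul, hr]; exact le_max_left _ _), le_refl _⟩, rfl⟩
  have hpxs : (r / ‖x‖) • x ∈ sphere (0:EuclideanSpace ℝ (Fin d)) r := by
    rw [mem_sphere_zero_iff_norm, norm_smul, Real.norm_eq_abs,
      _root_.abs_of_nonneg (by positivity), div_mul_cancel₀ _ (ne_of_gt hxpos)]
  have hpy : (r / ‖y‖) • y ∈ (fun c : ℝ => c • y) '' Icc 1 (r / ‖y‖) :=
    ⟨r/‖y‖, ⟨(le_div_iff₀ hypos).2 (by rw [one_mul, hr]; exact le_max_right _ _), le_refl _⟩, rfl⟩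
  have hpys : (r / ‖y‖) • y ∈ sphere (0:EuclideanSpace ℝ (Fin d)) r := by
    rw [mem_sphere_zero_iff_norm, norm_smul, Real.norm_eq_abs,
      _root_.abs_of_nonneg (by positivity), div_mul_cancel₀ _ (ne_of_gt hypos)]
  refine ⟨((fun c : ℝ => c • x) '' Icc 1 (r / ‖x‖)) ∪ sphere 0 r ∪
      ((fun c : ℝ => c • y) '' Icc 1 (r / ‖y‖)), ?_, ?_, ?_, ?_⟩
  · exact union_subset (union_subset hx2 hsphS) hy2
  · exact Or.inl (Or.inl hx3)
  · exact Or.inr hy3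
  · refine IsPreconnected.union ((r/‖y‖)•y) (Or.inr hpys) hpy ?_ hy1
    exact IsPreconnected.union ((r/‖x‖)•x) hpx hpxs hx1 hsph

lemma compl_preconnected {d : ℕ} (hd : 2 ≤ d) {U : Set (EuclideanSpace ℝ (Fin d))}
    (hUbdd : IsBounded U)
    (hcomp : ∀ x ∈ Uᶜ, ¬ IsBounded (connectedComponentIn Uᶜ x)) :
    IsPreconnected Uᶜ := by
  obtain ⟨R, hR0, hUR⟩ := hUbdd.subset_ball_lt 0 0
  set S := {x : EuclideanSpace ℝ (Fin d) | R < ‖x‖} with hS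
  have hSU : S ⊆ Uᶜ := fun x hx hxU =>
    absurd (mem_ball_zero_iff.1 (hUR hxU)) (not_lt.2 (le_of_lt hx))
  have hSpc : IsPreconnected S := exterior_preconnected hd hR0.le
  have hfar : ∀ x ∈ Uᶜ, ∃ z, z ∈ connectedComponentIn Uᶜ x ∩ S := by
    intro x hx
    by_contra h
    push_neg at h
    apply hcomp x hx
    apply (isBounded_closedBall (x := (0:EuclideanSpace ℝ (Fin d))) (r := R)).subset
    intro z hz
    rw [mem_closedBall_zero_iff]
    by_contra hzR
    exact (h z) ⟨hz, not_le.1 hzR⟩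
  refine isPreconnected_of_forall_pair ?_
  intro x hx y hy
  obtain ⟨zx, hzx⟩ := hfar x hx
  obtain ⟨zy, hzy⟩ := hfar y hy
  refine ⟨connectedComponentIn Uᶜ x ∪ S ∪ connectedComponentIn Uᶜ y, ?_, ?_, ?_, ?_⟩
  · exact union_subset (union_subset (connectedComponentIn_subset _ _) hSU)
      (connectedComponentIn_subset _ _)
  · exact Or.inl (Or.inl (mem_connectedComponentIn hx))
  · exact Or.inr (mem_connectedComponentIn hy)
  · refine IsPreconnected.union zy (Or.inr hzy.2) hzy.1 ?_ isPreconnected_connectedComponentIn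
    exact IsPreconnected.union zx hzx.1 hzx.2 isPreconnected_connectedComponentIn hSpc


/-- The topological hull `T(G)` of a set `G ⊆ ℝ^d`: the union of `G` with the
bounded connected components of the complement `ℝ^d \ G`. -/
def topHull {d : ℕ} (G : Set (EuclideanSpace ℝ (Fin d))) : Set (EuclideanSpace ℝ (Fin d)) :=
  G ∪ {x | x ∈ Gᶜ ∧ Bornology.IsBounded (connectedComponentIn Gᶜ x)}

/-- Let `d ≥ 2`, let `f : ℝ^d → ℝ^d` be a continuous open map, and let `U` be a
bounded full domain with `f(∂U) ∩ f(U) = ∅`. Then `f(∂U) = ∂(f(U))` and `f(U)` is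
a bounded full domain. -/
theorem image_of_bounded_full_domain {d : ℕ} (hd : 2 ≤ d)
    (f : EuclideanSpace ℝ (Fin d) → EuclideanSpace ℝ (Fin d))
    (hfc : Continuous f) (hfo : IsOpenMap f)
    (U : Set (EuclideanSpace ℝ (Fin d)))
    (hUopen : IsOpen U) (hUconn : IsConnected U) (hUbdd : Bornology.IsBounded U)
    (hUfull : topHull U = U)
    (hdisj : f '' (frontier U) ∩ f '' U = ∅) :
    f '' (frontier U) = frontier (f '' U) ∧
      Bornology.IsBounded (f '' U) ∧ IsOpen (f '' U) ∧ IsConnected (f '' U) ∧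
      topHull (f '' U) = f '' U := by
  classical
  have hclU : IsCompact (closure U) := hUbdd.isCompact_closure
  set G := f '' U with hG
  have hGopen : IsOpen G := hfo U hUopen
  have hGconn : IsConnected G := hUconn.image f hfc.continuousOn
  have hGne : G.Nonempty := hGconn.nonempty
  have hKc : IsCompact (f '' closure U) := hclU.image hfc
  have hGbdd : IsBounded G := hKc.isBounded.subset (image_mono (f := f) subset_closure)
  have hclG : closure G = f '' closure U := by
    apply Subset.antisymm
    · exact closure_minimal (image_mono (f := f) subset_closure) hKc.isClosed
    · exact image_closure_subset_closure_image hfc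
  have hdisj' : ∀ y ∈ f '' frontier U, y ∉ G := by
    intro y hy hyG
    have h1 : y ∈ f '' frontier U ∩ f '' U := ⟨hy, hyG⟩
    rw [hdisj] at h1
    exact h1
  have hfrG : f '' frontier U = frontier G := by
    rw [hGopen.frontier_eq, hclG, closure_eq_self_union_frontier U, image_union]
    apply Subset.antisymm
    · intro y hy
      exact ⟨Or.inr hy, hdisj' y hy⟩
    · rintro y ⟨hy1, hy2⟩
      rcases hy1 with h | h
      · exact absurd h hy2
      · exact h
  have hpt : ∀ M : ℝ, ∃ z : EuclideanSpace ℝ (Fin d), M < ‖z‖ := by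
    intro M
    refine ⟨EuclideanSpace.single (⟨0, by omega⟩ : Fin d) (max M 0 + 1), ?_⟩
    rw [EuclideanSpace.norm_single, Real.norm_eq_abs, _root_.abs_of_nonneg (by positivity)]
    have := le_max_left M 0
    linarith
  have hfrUne : (frontier U).Nonempty := by
    by_contra h
    rw [not_nonempty_iff_eq_empty] at h
    have hclop : IsClopen U := isClopen_iff_frontier_eq_empty.2 h
    rcases isClopen_iff.1 hclop with h1 | h1
    · exact hUconn.nonempty.ne_empty h1
    · obtain ⟨R, hR, hsub⟩ := hUbdd.subset_ball_lt 0 0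
      obtain ⟨z, hz⟩ := hpt R
      have hzU : z ∈ U := h1 ▸ mem_univ z
      exact absurd (mem_ball_zero_iff.1 (hsub hzU)) (not_lt.2 hz.le)
  have hcompU : ∀ x ∈ Uᶜ, ¬ IsBounded (connectedComponentIn Uᶜ x) := by
    intro x hx hbdd
    have h1 : x ∈ topHull U := Or.inr ⟨hx, hbdd⟩
    rw [hUfull] at h1
    exact hx h1
  have hUc_pc : IsPreconnected Uᶜ := compl_preconnected hd hUbdd hcompU
  have hfrU_pc : IsPreconnected (frontier U) := by
    by_contra hnpc
    rw [IsPreconnected] at hnpc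
    push_neg at hnpc
    obtain ⟨u, v, hu, hv, hcover, hne1, hne2, hempty⟩ := hnpc
    have hfrcl : IsClosed (frontier U) := isClosed_frontier
    refine no_separation (A := closure U) (B := Uᶜ)
      (P := frontier U \ u) (Q := frontier U \ v)
      isClosed_closure hUopen.isClosed_compl hUconn.isPreconnected.closure hUc_pc
      ?_ ?_ (hfrcl.sdiff hu) (hfrcl.sdiff hv) ?_ hUbdd.closure ?_ ?_
    · apply eq_univ_of_forall
      intro x
      by_cases hx : x ∈ U
      · exact Or.inl (subset_closure hx)
      · exact Or.inr hx
    · have h1 : closure U ∩ Uᶜ = frontier U := by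
        rw [hUopen.frontier_eq, diff_eq]
      rw [h1]
      apply Subset.antisymm
      · intro x hx
        by_cases hxu : x ∈ u
        · refine Or.inr ⟨hx, ?_⟩
          intro hxv
          have : x ∈ frontier U ∩ (u ∩ v) := ⟨hx, hxu, hxv⟩
          rw [hempty] at this
          exact this
        · exact Or.inl ⟨hx, hxu⟩
      · rintro x (⟨hx, _⟩ | ⟨hx, _⟩) <;> exact hx
    · rw [disjoint_iff_inter_eq_empty]
      apply eq_empty_iff_forall_notMem.2
      rintro x ⟨⟨hx1, hx2⟩, ⟨hx3, hx4⟩⟩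
      rcases hcover hx1 with h | h
      · exact hx2 h
      · exact hx4 h
    · obtain ⟨x, hx, hxv⟩ := hne2
      refine ⟨x, hx, ?_⟩
      intro hxu
      have : x ∈ frontier U ∩ (u ∩ v) := ⟨hx, hxu, hxv⟩
      rw [hempty] at this
      exact this
    · obtain ⟨x, hx, hxu⟩ := hne1
      refine ⟨x, hx, ?_⟩
      intro hxv
      have : x ∈ frontier U ∩ (u ∩ v) := ⟨hx, hxu, hxv⟩
      rw [hempty] at this
      exact this
  have hfrG_pc : IsPreconnected (frontier G) := by
    rw [← hfrG]
    exact hfrU_pc.image f hfc.continuousOn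
  have hfrGne : (frontier G).Nonempty := by
    rw [← hfrG]
    exact hfrUne.image f
  have hfrG_sub : frontier G ⊆ Gᶜ := by
    intro y hy
    rw [← hfrG] at hy
    exact hdisj' y hy
  obtain ⟨z₀, hz₀⟩ := hfrGne
  have hGc_comp : ∀ y ∈ Gᶜ, frontier G ⊆ connectedComponentIn Gᶜ y := by
    intro y hy
    have hCcl : IsClosed (connectedComponentIn Gᶜ y) :=
      isClosed_connectedComponentIn hGopen.isClosed_compl
    have hfr_sub : frontier (connectedComponentIn Gᶜ y) ⊆ frontier G := by
      have h1 := frontier_connectedComponentIn_subset (F := Gᶜ) hGopen.isClosed_compl (x := y)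
      rwa [frontier_compl] at h1
    have hfrCne : (frontier (connectedComponentIn Gᶜ y)).Nonempty := by
      by_contra h
      rw [not_nonempty_iff_eq_empty] at h
      have hclop : IsClopen (connectedComponentIn Gᶜ y) := isClopen_iff_frontier_eq_empty.2 h
      rcases isClopen_iff.1 hclop with h1 | h1
      · have h2 := mem_connectedComponentIn hy
        rw [h1] at h2
        exact h2
      · obtain ⟨g0, hg0⟩ := hGne
        have hg0' : g0 ∈ Gᶜ := (connectedComponentIn_subset _ _) (h1 ▸ mem_univ g0)
        exact hg0' hg0
    obtain ⟨z, hz⟩ := hfrCne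
    have hzC : z ∈ connectedComponentIn Gᶜ y := hCcl.frontier_subset hz
    have hzfrG : z ∈ frontier G := hfr_sub hz
    have h1 : frontier G ⊆ connectedComponentIn Gᶜ z :=
      hfrG_pc.subset_connectedComponentIn hzfrG hfrG_sub
    rw [connectedComponentIn_eq hzC]
    exact h1
  have hGc_pc : IsPreconnected Gᶜ := by
    have hz₀Gc : z₀ ∈ Gᶜ := hfrG_sub hz₀
    have heq : Gᶜ = connectedComponentIn Gᶜ z₀ := by
      apply Subset.antisymm ?_ (connectedComponentIn_subset _ _)
      intro y hy
      have hz₀y : z₀ ∈ connectedComponentIn Gᶜ y := hGc_comp y hy hz₀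
      rw [← connectedComponentIn_eq hz₀y]
      exact mem_connectedComponentIn hy
    rw [heq]
    exact isPreconnected_connectedComponentIn
  obtain ⟨RG, hRG, hGR⟩ := hGbdd.subset_ball_lt 0 0
  have hGc_unb : ¬ IsBounded Gᶜ := by
    intro h
    obtain ⟨M, hM, hMsub⟩ := h.subset_ball_lt 0 0
    obtain ⟨z, hz⟩ := hpt (max RG M)
    have hzGc : z ∈ Gᶜ := by
      intro hzG
      have := mem_ball_zero_iff.1 (hGR hzG)
      have h2 : RG ≤ max RG M := le_max_left _ _
      linarith
    have := mem_ball_zero_iff.1 (hMsub hzGc)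
    have h2 : M ≤ max RG M := le_max_right _ _
    linarith
  have hHull : topHull G = G := by
    apply Subset.antisymm
    · intro y hy
      rcases hy with h | ⟨hyc, hyb⟩
      · exact h
      · exfalso
        have h1 : Gᶜ ⊆ connectedComponentIn Gᶜ y :=
          hGc_pc.subset_connectedComponentIn hyc (subset_refl _)
        exact hGc_unb (hyb.subset h1)
    · exact subset_union_left
  exact ⟨hfrG, hGbdd, hGopen, hGconn, hHull⟩
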